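/- arXiv:2307.01962 — 2 statements merged into one kernel-verified Lean document; each statement's English description precedes it below -/
import Mathlib

section
/- Let L be a singular n×n matrix over a commutative ring with all row sums zero, and define t_j = det(L(j,j)), the principal cofactor obtained by deleting row and column j. Then the row vector (t_1, ..., t_n) satisfies (t_1,...,t_n) · L = 0; that is, for every column u, the sum over v of t_v · L_{vu} equals 0. -/
open Matrix Finset

/-- A matrix with all row sums zero has zero determinant. -/
lemma det_eq_zero_of_row_sums_zero {R : Type*} [CommRing R] {m : Type*} [Fintype m]
    [DecidableEq m] [Nonempty m] (M : Matrix m m R) (h : ∀ i, ∑ j, M i j = 0) :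
    M.det = 0 := by
  have h1 : M.mulVec (fun _ => 1) = 0 := by
    ext i
    simpa [Matrix.mulVec, dotProduct] using h i
  have h2 : (M.adjugate * M).mulVec (fun _ => 1) = 0 := by
    rw [← Matrix.mulVec_mulVec, h1, Matrix.mulVec_zero]
  rw [Matrix.adjugate_mul, Matrix.smul_mulVec, Matrix.one_mulVec] at h2
  simpa using congrFun h2 (Classical.arbitrary m)

/-- For a matrix with all row sums zero, the adjugate is constant along columns. -/
lemma adjugate_const {R : Type*} [CommRing R] {m : Type*} [Fintype m]
    [DecidableEq m] (L : Matrix m m R) (h : ∀ i, ∑ j, L i j = 0) (u v : m) :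
    L.adjugate u v = L.adjugate v v := by
  have : Nonempty m := ⟨u⟩
  have key : (L.updateRow v (Pi.single v 1 - Pi.single u 1)).det = 0 := by
    apply det_eq_zero_of_row_sums_zero
    intro i
    rcases eq_or_ne i v with rfl | hi
    · simp [Matrix.updateRow_self, Pi.single_apply]
    · simp [Matrix.updateRow_ne hi, h i]
  rw [Matrix.adjugate_apply, Matrix.adjugate_apply]
  have hadd := Matrix.det_updateRow_add L v (Pi.single v 1 - Pi.single u 1) (Pi.single u 1)
  rw [sub_add_cancel] at hadd
  rw [hadd, key, zero_add]

/-- For a singular matrix `L` with all row sums zero, the row vector of principal cofactors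
`t_j = det(L(j,j))` is a left null vector of `L`: for every column `u`,
`∑ v, t_v · L v u = 0`. -/
theorem stmt4 {R : Type*} [CommRing R] {n : ℕ} (L : Matrix (Fin (n + 1)) (Fin (n + 1)) R)
    (hdet : L.det = 0) (h : ∀ i, ∑ j, L i j = 0) (u : Fin (n + 1)) :
    ∑ v, (L.submatrix v.succAbove v.succAbove).det * L v u = 0 := by
  have ht : ∀ v : Fin (n + 1), (L.submatrix v.succAbove v.succAbove).det = L.adjugate u v := by
    intro v
    rw [adjugate_const L h u v, Matrix.adjugate_fin_succ_eq_det_submatrix]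
    rw [show ((v : ℕ) + v) = 2 * v by ring]
    simp [pow_mul]
  have key := congrFun (congrFun (Matrix.adjugate_mul L) u) u
  rw [hdet] at key
  simp only [Matrix.mul_apply, zero_smul, Matrix.zero_apply] at key
  calc ∑ v, (L.submatrix v.succAbove v.succAbove).det * L v u
      = ∑ v, L.adjugate u v * L v u := by simp_rw [ht]
    _ = 0 := key
end

section
/- Let G be a digraph on n vertices with d_u^+(G) = d_u^-(G) = d > 0 for every vertex u. Then for any edge e of G and any vertex v, the number of oriented spanning trees of the line digraph satisfies κ_e(L(G)) = d^{n(d-1)-1} · κ_v(G). -/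
/-! A digraph on a finite vertex type `V` is given by its edge set `E : Finset (V × V)`. -/

variable {V : Type*} [Fintype V] [DecidableEq V]

/-- The outdegree of a vertex `v`: the number of edges with tail `v`. -/
def outdeg (E : Finset (V × V)) (v : V) : ℕ := (E.filter fun e => e.1 = v).card

/-- The indegree of a vertex `v`: the number of edges with head `v`. -/
def indeg (E : Finset (V × V)) (v : V) : ℕ := (E.filter fun e => e.2 = v).card

/-- The edge set of the line digraph: its vertices are the edges of `G`, with an edge
`e → f` exactly when the head of `e` is the tail of `f`. -/
def lineE (E : Finset (V × V)) : Finset ({e // e ∈ E} × {e // e ∈ E}) :=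
  Finset.univ.filter fun p => (p.1 : V × V).2 = (p.2 : V × V).1

/-- Strong connectivity: every vertex can reach every other vertex along directed edges. -/
def StronglyConnected (E : Finset (V × V)) : Prop :=
  ∀ u v : V, Relation.ReflTransGen (fun a b => (a, b) ∈ E) u v

/-- The transition matrix of the simple random walk on the digraph `E`: from `i`, move to
each out-neighbour with probability `1 / d⁺(i)`. -/
noncomputable def transMat (E : Finset (V × V)) : Matrix V V ℝ :=
  fun i j => if (i, j) ∈ E then (outdeg E i : ℝ)⁻¹ else 0

/-- The Kemeny constant of `P`, defined spectrally as `∑_{λ ≠ 1} 1/(1-λ)`, the sum running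
over the roots (with multiplicity) of the characteristic polynomial of `P` over `ℂ`,
with one copy of the eigenvalue `1` removed. -/
noncomputable def kemeny {n : Type*} [Fintype n] [DecidableEq n] (P : Matrix n n ℝ) : ℂ :=
  (((P.map (Complex.ofReal)).charpoly.roots.erase 1).map fun z => (1 - z)⁻¹).sum

/-- `π` is a stationary distribution of `P`: positive, summing to `1`, with `πᵀ P = πᵀ`. -/
def IsStationaryDist {n : Type*} [Fintype n] (P : Matrix n n ℝ) (π : n → ℝ) : Prop :=
  (∀ i, 0 < π i) ∧ (∑ i, π i = 1) ∧ ∀ j, ∑ i, π i * P i j = π j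

/-- `f` is (the parent map of) an oriented spanning tree of `E` rooted at `u`: the root is
a fixed point, every other vertex `v` has its unique out-edge `(v, f v) ∈ E`, and iterating
`f` from any vertex reaches the root. -/
def IsSpanTree (E : Finset (V × V)) (u : V) (f : V → V) : Prop :=
  f u = u ∧ (∀ v, v ≠ u → (v, f v) ∈ E) ∧ ∀ v, ∃ k : ℕ, f^[k] v = u

/-- The number of oriented spanning trees of `E` rooted at `u`. -/
noncomputable def kappa (E : Finset (V × V)) (u : V) : ℕ :=
  Nat.card {f : V → V // IsSpanTree E u f}

/-- `σ` is (the successor map of) an Eulerian circuit of `E`: a permutation of the edges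
such that each edge is followed by an edge starting at its head, acting transitively on
the edges (a single closed walk through all edges). Eulerian circuits, counted up to
cyclic rotation, correspond bijectively to such permutations. -/
def IsEulerSucc (E : Finset (V × V)) (σ : Equiv.Perm {e // e ∈ E}) : Prop :=
  (∀ e : {e // e ∈ E}, (e : V × V).2 = ((σ e : {e // e ∈ E}) : V × V).1) ∧
    ∀ e f : {e // e ∈ E}, ∃ k : ℕ, (σ ^ k) e = f

/-- The number of Eulerian circuits of `E`. -/
noncomputable def eulerCount (E : Finset (V × V)) : ℕ :=
  Nat.card {σ : Equiv.Perm {e // e ∈ E} // IsEulerSucc E σ}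

/-- The `k`-blow-up of `E`: each vertex `i` becomes the class `{i} × Fin k`, with all edges
from the class of `i` to the class of `j` whenever `(i, j)` is an edge. -/
def blowup (E : Finset (V × V)) (k : ℕ) : Finset ((V × Fin k) × (V × Fin k)) :=
  Finset.univ.filter fun p => (p.1.1, p.2.1) ∈ E

/-- The spanning tree enumerator of `E` rooted at `u`, with edge weights induced by vertex
indeterminates `w` (the edge `(v, z)` has weight `w z`): the sum over all oriented spanning
trees rooted at `u` of the product of the weights of their edges. -/
noncomputable def treeEnum {R : Type*} [CommRing R] (E : Finset (V × V)) (w : V → R)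
    (u : V) : R :=
  ∑ᶠ (f : V → V) (_ : IsSpanTree E u f), ∏ v ∈ Finset.univ.erase u, w (f v)

open Finset Matrix Polynomial
noncomputable def Lap (F : Finset (V × V)) : Matrix V V ℝ :=
  Matrix.of fun i j => (if i = j then (outdeg F i : ℝ) else 0) - (if (i, j) ∈ F then 1 else 0)

lemma card_out (F : Finset (V × V)) (w : V) :
    (univ.filter fun z => (w, z) ∈ F).card = outdeg F w := by
  unfold outdeg
  apply Finset.card_nbij' (fun z => (w, z)) (fun e => e.2)
  · intro a ha; simp only [mem_coe, mem_filter, mem_univ, true_and] at ha ⊢; exact ⟨ha, trivial⟩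
  · intro e he; simp only [mem_coe, mem_filter, mem_univ, true_and] at he ⊢
    obtain ⟨h1, h2⟩ := he
    have : (w, e.2) = e := by rw [← h2]
    rwa [this]
  · intro a _; rfl
  · intro e he; simp only [mem_coe, mem_filter] at he
    rw [← he.2]

lemma card_in (F : Finset (V × V)) (w : V) :
    (univ.filter fun z => (z, w) ∈ F).card = indeg F w := by
  unfold indeg
  apply Finset.card_nbij' (fun z => (z, w)) (fun e => e.1)
  · intro a ha; simp only [mem_coe, mem_filter, mem_univ, true_and] at ha ⊢; exact ⟨ha, trivial⟩
  · intro e he; simp only [mem_coe, mem_filter, mem_univ, true_and] at he ⊢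
    obtain ⟨h1, h2⟩ := he
    have : (e.1, w) = e := by rw [← h2]
    rwa [this]
  · intro a _; rfl
  · intro e he; simp only [mem_coe, mem_filter] at he
    rw [← he.2]

lemma sum_row_ind (F : Finset (V × V)) (i : V) :
    ∑ j, (if (i, j) ∈ F then (1:ℝ) else 0) = (outdeg F i : ℝ) := by
  rw [Finset.sum_boole, ← card_out F i]

lemma sum_col_ind (F : Finset (V × V)) (j : V) :
    ∑ i, (if (i, j) ∈ F then (1:ℝ) else 0) = (indeg F j : ℝ) := by
  rw [Finset.sum_boole, ← card_in F j]

lemma lap_row_sum (F : Finset (V × V)) (i : V) : ∑ j, Lap F i j = 0 := by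
  unfold Lap
  simp only [Matrix.of_apply, Finset.sum_sub_distrib, sum_row_ind]
  rw [Finset.sum_ite_eq univ i (fun _ => (outdeg F i : ℝ))]
  simp

lemma lap_col_sum (F : Finset (V × V)) (j : V) :
    ∑ i, Lap F i j = (outdeg F j : ℝ) - (indeg F j : ℝ) := by
  unfold Lap
  simp only [Matrix.of_apply, Finset.sum_sub_distrib, sum_col_ind]
  rw [Finset.sum_ite_eq' univ j (fun x => (outdeg F x : ℝ))]
  simp

lemma det_lap_updateRow (F : Finset (V × V)) (u : V) :
    ((Lap F).updateRow u (Pi.single u 1)).det = (kappa F u : ℝ) := by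
  classical
  set A : V → Finset V := fun w => if w = u then {u} else univ.filter fun z => (w, z) ∈ F with hA
  set g : V → V → (V → ℝ) := fun w z =>
    if w = u then Pi.single u 1 else (Pi.single w 1 - Pi.single z 1) with hg
  have hrows : (Lap F).updateRow u (Pi.single u 1)
      = Matrix.of fun w => ∑ z ∈ A w, g w z := by
    ext w j
    by_cases hw : w = u
    · subst hw
      simp [hA, hg]
    · rw [Matrix.updateRow_ne hw]
      simp only [Matrix.of_apply, hA, hg, if_neg hw, Finset.sum_apply, Pi.sub_apply,
        Pi.single_apply]
      rw [Finset.sum_sub_distrib, Finset.sum_const, Finset.sum_ite_eq _ j (fun _ => (1:ℝ))]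
      rw [card_out]
      simp only [mem_filter, mem_univ, true_and, nsmul_eq_mul, mul_ite, mul_one, mul_zero]
      unfold Lap
      simp only [Matrix.of_apply]
      congr 1
      · by_cases hjw : j = w
        · subst hjw; simp
        · simp [hjw, Ne.symm hjw]
  have h1 : ((Lap F).updateRow u (Pi.single u 1)).det
      = ∑ r ∈ Fintype.piFinset A, (Matrix.of fun i => g i (r i)).det := by
    rw [hrows]
    exact Matrix.detRowAlternating.toMultilinearMap.map_sum_finset g A
  have key : ∀ r ∈ Fintype.piFinset A,
      (Matrix.of fun i => g i (r i)).det = if (∀ w, ∃ k : ℕ, r^[k] w = u) then 1 else 0 := by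
    intro r hr
    rw [Fintype.mem_piFinset] at hr
    have hru : r u = u := by have := hr u; simp [hA] at this; exact this
    by_cases hreach : ∀ w, ∃ k : ℕ, r^[k] w = u
    · rw [if_pos hreach]
      set ρ : V → ℕ := fun w => Nat.find (hreach w) with hρ
      have hρ0 : ∀ w, ρ w = 0 → w = u := by
        intro w h
        have := Nat.find_spec (hreach w)
        rw [show Nat.find (hreach w) = ρ w from rfl, h] at this
        simpa using this
      have hρu : ρ u = 0 := by
        simp only [hρ, Nat.find_eq_zero]
        simp
      have hρw : ∀ w, w ≠ u → ρ (r w) < ρ w := by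
        intro w hw
        have h1 : ρ w ≠ 0 := fun h => hw (hρ0 w h)
        have hspec := Nat.find_spec (hreach w)
        have : r^[ρ w - 1] (r w) = u := by
          rw [← Function.iterate_succ_apply]
          rw [Nat.succ_eq_add_one, Nat.sub_add_cancel (Nat.one_le_iff_ne_zero.2 h1)]
          exact hspec
        have h2 : ρ (r w) ≤ ρ w - 1 := Nat.find_min' (hreach (r w)) this
        omega
      have hbt : (Matrix.of fun i => g i (r i)).BlockTriangular (fun i => -(ρ i : ℤ)) := by
        intro i j hij
        simp only [neg_lt_neg_iff, Int.ofNat_lt, Nat.cast_lt] at hij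
        -- hij : ρ i < ρ j
        simp only [Matrix.of_apply, hg]
        by_cases hi : i = u
        · subst hi
          rw [if_pos rfl, Pi.single_apply, if_neg]
          intro h; subst h
          rw [hρu] at hij; omega
        · rw [if_neg hi]
          simp only [Pi.sub_apply, Pi.single_apply]
          have hji : j ≠ i := by intro h; subst h; omega
          have hjri : j ≠ r i := by
            intro h; subst h
            exact absurd (hρw i hi) (by omega)
          rw [if_neg hji, if_neg hjri]
          ring
      rw [hbt.det]
      apply Finset.prod_eq_one
      intro a _
      have hblock : (Matrix.of fun i => g i (r i)).toSquareBlock (fun i => -(ρ i : ℤ)) a = 1 := by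
        ext ⟨i, hi⟩ ⟨j, hj⟩
        simp only [Matrix.toSquareBlock_def, Matrix.of_apply, Matrix.one_apply, hg]
        have hij : ρ i = ρ j := by
          have h : -((ρ i : ℤ)) = -((ρ j : ℤ)) := hi.trans hj.symm
          omega
        by_cases hieq : (⟨i, hi⟩ : {k // -(ρ k : ℤ) = a}) = ⟨j, hj⟩
        · rw [if_pos hieq]
          have : i = j := congrArg Subtype.val hieq
          subst this
          by_cases hiu : i = u
          · subst hiu; simp [Pi.single_apply]
          · rw [if_neg hiu]
            have hne : i ≠ r i := by
              intro h
              have := hρw i hiu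
              rw [← h] at this; omega
            simp [Pi.single_apply, hne]
        · rw [if_neg hieq]
          have hne : i ≠ j := by
            intro h; apply hieq; subst h; rfl
          by_cases hiu : i = u
          · subst hiu
            have hj0 : ρ j = 0 := by rw [← hij, hρu]
            exact absurd (hρ0 j hj0).symm hne
          · rw [if_neg hiu]
            have h1 : j ≠ i := fun h => hne h.symm
            have h2 : j ≠ r i := by
              intro h
              subst h
              have := hρw i hiu
              omega
            simp [Pi.single_apply, h1, h2]
      rw [hblock, Matrix.det_one]
    · rw [if_neg hreach]
      push_neg at hreach
      obtain ⟨w, hw⟩ := hreach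
      obtain ⟨a, b, hab, heq⟩ : ∃ a b : ℕ, a < b ∧ r^[a] w = r^[b] w := by
        obtain ⟨x, y, hxy, hfeq⟩ := Finite.exists_ne_map_eq_of_infinite (fun k : ℕ => r^[k] w)
        rcases lt_or_gt_of_ne hxy with h | h
        · exact ⟨x, y, h, hfeq⟩
        · exact ⟨y, x, h, hfeq.symm⟩
      set c := r^[a] w with hc
      set p := b - a with hp
      have hppos : 0 < p := by omega
      have hper : Function.IsPeriodicPt r p c := by
        unfold Function.IsPeriodicPt Function.IsFixedPt
        rw [hc, ← Function.iterate_add_apply, hp]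
        rw [show b - a + a = b by omega]
        exact heq.symm
      have hcu : ∀ k, r^[k] c ≠ u := by
        intro k
        rw [hc, ← Function.iterate_add_apply]
        exact hw _
      set O : Finset V := (Finset.range p).image (fun k => r^[k] c) with hO
      have hOall : ∀ k, r^[k] c ∈ O := by
        intro k
        have : r^[k] c = r^[k % p] c := (hper.iterate_mod_apply k).symm
        rw [this]
        exact Finset.mem_image_of_mem _ (Finset.mem_range.2 (Nat.mod_lt _ hppos))
      have hcO : c ∈ O := hOall 0
      have hOu : ∀ i ∈ O, i ≠ u := by
        intro i hi
        simp only [hO, Finset.mem_image] at hi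
        obtain ⟨k, _, hk⟩ := hi
        rw [← hk]
        exact hcu k
      have hrO : ∀ i ∈ O, r i ∈ O := by
        intro i hi
        simp only [hO, Finset.mem_image] at hi
        obtain ⟨k, _, hk⟩ := hi
        rw [← hk]
        have : r (r^[k] c) = r^[k + 1] c := (Function.iterate_succ_apply' r k c).symm
        rw [this]
        exact hOall _
      have hsurj : ∀ j ∈ O, ∃ i ∈ O, r i = j := by
        intro j hj
        simp only [hO, Finset.mem_image] at hj
        obtain ⟨k, _, hk⟩ := hj
        refine ⟨r^[k + p - 1] c, hOall _, ?_⟩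
        have h3 : r (r^[k + p - 1] c) = r^[k + p - 1 + 1] c := (Function.iterate_succ_apply' r _ c).symm
        rw [h3, show k + p - 1 + 1 = k + p by omega, Function.iterate_add_apply,
          show r^[p] c = c from hper]
        exact hk
      have hinj : ∀ i₁ ∈ O, ∀ i₂ ∈ O, r i₁ = r i₂ → i₁ = i₂ := by
        intro i₁ h₁ i₂ h₂ h
        exact Finset.inj_on_of_surj_on_of_card_le (f := fun i _ => r i)
          (fun i hi => hrO i hi) (fun j hj => by obtain ⟨i, hi, hri⟩ := hsurj j hj; exact ⟨i, hi, hri⟩)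
          le_rfl h₁ h₂ h
      set v : V → ℝ := fun i => if i ∈ O then 1 else 0 with hv
      have hv0 : v ≠ 0 := by
        intro h
        have := congrFun h c
        simp [hv, hcO] at this
      have hvmul : v ᵥ* (Matrix.of fun i => g i (r i)) = 0 := by
        ext j
        simp only [Matrix.vecMul, dotProduct, hv, Pi.zero_apply, ite_mul, one_mul, zero_mul]
        rw [Finset.sum_ite_mem, Finset.univ_inter]
        have : ∀ i ∈ O, (Matrix.of fun i => g i (r i)) i j
            = (if j = i then (1:ℝ) else 0) - (if j = r i then 1 else 0) := by
          intro i hi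
          simp only [Matrix.of_apply, hg, if_neg (hOu i hi), Pi.sub_apply, Pi.single_apply]
        rw [Finset.sum_congr rfl this, Finset.sum_sub_distrib]
        rw [Finset.sum_ite_eq O j (fun _ => (1:ℝ))]
        have h2 : ∑ i ∈ O, (if j = r i then (1:ℝ) else 0) = if j ∈ O then 1 else 0 := by
          by_cases hj : j ∈ O
          · rw [if_pos hj]
            obtain ⟨i₀, hi₀, hri₀⟩ := hsurj j hj
            rw [Finset.sum_eq_single i₀]
            · rw [if_pos hri₀.symm]
            · intro i hi hne
              rw [if_neg]
              intro h
              exact hne (hinj i hi i₀ hi₀ (by rw [← h, hri₀]))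
            · intro h; exact absurd hi₀ h
          · rw [if_neg hj]
            apply Finset.sum_eq_zero
            intro i hi
            rw [if_neg]
            intro h
            exact hj (h ▸ hrO i hi)
        rw [h2]
        ring
      exact Matrix.exists_vecMul_eq_zero_iff.mp ⟨v, hv0, hvmul⟩
  rw [h1, Finset.sum_congr rfl key, Finset.sum_boole]
  congr 1
  have hset : (Fintype.piFinset A).filter (fun r => ∀ w, ∃ k : ℕ, r^[k] w = u)
      = univ.filter (IsSpanTree F u) := by
    ext f
    simp only [Finset.mem_filter, Fintype.mem_piFinset, Finset.mem_univ, true_and, IsSpanTree]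
    constructor
    · rintro ⟨hmem, hreach⟩
      have hfu : f u = u := by have := hmem u; simp [hA] at this; exact this
      refine ⟨hfu, ?_, hreach⟩
      intro w hwne
      have := hmem w
      simp [hA, if_neg hwne] at this
      exact this
    · rintro ⟨hfu, hmem, hreach⟩
      refine ⟨?_, hreach⟩
      intro w
      by_cases hwu : w = u
      · subst hwu; simp [hA, hfu]
      · simp [hA, if_neg hwu]
        exact hmem w hwu
  rw [hset]
  unfold kappa
  rw [Nat.card_eq_fintype_card]
  rw [Fintype.card_subtype]

lemma det_eq_zero_of_row_sums [Nonempty V] (M : Matrix V V ℝ)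
    (hrow : ∀ i, ∑ j, M i j = 0) : M.det = 0 := by
  apply Matrix.exists_mulVec_eq_zero_iff.mp
  refine ⟨fun _ => 1, ?_, ?_⟩
  · intro h
    have := congrFun h (Classical.arbitrary V)
    simpa using this
  · ext i
    simp [Matrix.mulVec, dotProduct, hrow i]

lemma adj_col_eq [Nonempty V] (M : Matrix V V ℝ) (hrow : ∀ i, ∑ j, M i j = 0)
    (i i' j : V) : M.adjugate i j = M.adjugate i' j := by
  rw [Matrix.adjugate_apply, Matrix.adjugate_apply]
  have hsplit : (Pi.single i 1 : V → ℝ) = ((Pi.single i 1 : V → ℝ) - Pi.single i' 1) + Pi.single i' 1 := by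
    ring
  rw [hsplit, Matrix.det_updateRow_add]
  have hz : (M.updateRow j ((Pi.single i 1 : V → ℝ) - Pi.single i' 1)).det = 0 := by
    apply det_eq_zero_of_row_sums
    intro w
    by_cases hwj : w = j
    · subst hwj
      simp [Matrix.updateRow_self, Pi.single_apply, Finset.sum_sub_distrib]
    · simp only [Matrix.updateRow_ne hwj]
      exact hrow w
  rw [hz, zero_add]

lemma adj_entries_eq [Nonempty V] (M : Matrix V V ℝ)
    (hrow : ∀ i, ∑ j, M i j = 0) (hcol : ∀ j, ∑ i, M i j = 0)
    (i j k l : V) : M.adjugate i j = M.adjugate k l := by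
  have hT : ∀ a b, M.adjugate a b = Mᵀ.adjugate b a := by
    intro a b
    rw [← Matrix.adjugate_transpose, Matrix.transpose_apply]
  have step1 : M.adjugate i j = M.adjugate k j := adj_col_eq M hrow i k j
  have step2 : M.adjugate k j = M.adjugate k l := by
    rw [hT k j, hT k l]
    exact adj_col_eq Mᵀ (by intro a; simpa [Matrix.transpose_apply] using hcol a) j l k
  rw [step1, step2]

/-- The polynomial `x ↦ det (M + x • 1)`. -/
noncomputable def detPoly (M : Matrix V V ℝ) : Polynomial ℝ :=
  ∑ s : Finset V,
    Polynomial.C ((Matrix.of (s.piecewise (fun i => (Pi.single i 1 : V → ℝ)) (fun i => M i))).det)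
      * Polynomial.X ^ s.card

lemma detPoly_eval (M : Matrix V V ℝ) (x : ℝ) :
    (detPoly M).eval x = (M + x • (1 : Matrix V V ℝ)).det := by
  classical
  have h1 : (M + x • (1 : Matrix V V ℝ)).det
      = Matrix.detRowAlternating.toMultilinearMap
          ((fun i => x • (Pi.single i 1 : V → ℝ)) + (fun i => M i)) := by
    have : (M + x • (1 : Matrix V V ℝ))
        = Matrix.of ((fun i => x • (Pi.single i 1 : V → ℝ)) + (fun i => M i)) := by
      ext i j
      simp [Matrix.one_apply, Pi.single_apply]
      by_cases h : i = j <;> simp [h, eq_comm, mul_comm] <;> ring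
    rw [this]
    rfl
  rw [h1, MultilinearMap.map_add_univ]
  unfold detPoly
  rw [Polynomial.eval_finset_sum]
  apply Finset.sum_congr rfl
  intro s _
  have hpw : s.piecewise (fun i => x • (Pi.single i 1 : V → ℝ)) (fun i => M i)
      = s.piecewise (fun i => x • (s.piecewise (fun i => (Pi.single i 1 : V → ℝ)) (fun i => M i)) i)
          (s.piecewise (fun i => (Pi.single i 1 : V → ℝ)) (fun i => M i)) := by
    ext i j
    by_cases hi : i ∈ s <;> simp [Finset.piecewise, hi]
  rw [hpw, MultilinearMap.map_piecewise_smul]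
  simp only [Finset.prod_const, smul_eq_mul, Polynomial.eval_mul, Polynomial.eval_C,
    Polynomial.eval_pow, Polynomial.eval_X]
  rw [mul_comm]
  congr 1

lemma detPoly_coeff_zero (M : Matrix V V ℝ) : (detPoly M).coeff 0 = M.det := by
  classical
  unfold detPoly
  rw [Polynomial.finset_sum_coeff]
  rw [Finset.sum_eq_single (∅ : Finset V)]
  · simp [Finset.piecewise_empty]
    rfl
  · intro s _ hs
    rw [Polynomial.coeff_C_mul, Polynomial.coeff_X_pow]
    rw [if_neg (by simpa using fun h => hs (Finset.card_eq_zero.mp h.symm))]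
    ring
  · intro h
    exact absurd (Finset.mem_univ _) h

lemma detPoly_coeff_one (M : Matrix V V ℝ) : (detPoly M).coeff 1 = ∑ i, M.adjugate i i := by
  classical
  unfold detPoly
  rw [Polynomial.finset_sum_coeff]
  have hterm : ∀ s : Finset V,
      (Polynomial.C ((Matrix.of (s.piecewise (fun i => (Pi.single i 1 : V → ℝ)) (fun i => M i))).det)
        * Polynomial.X ^ s.card).coeff 1
      = if s.card = 1 then
          (Matrix.of (s.piecewise (fun i => (Pi.single i 1 : V → ℝ)) (fun i => M i))).det else 0 := by
    intro s
    rw [Polynomial.coeff_C_mul, Polynomial.coeff_X_pow]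
    by_cases h : s.card = 1
    · rw [if_pos h, if_pos h.symm, mul_one]
    · rw [if_neg h, if_neg (fun hh => h hh.symm), mul_zero]
  rw [Finset.sum_congr rfl (fun s _ => hterm s)]
  rw [Finset.sum_ite, Finset.sum_const, smul_zero, add_zero]
  have himg : univ.filter (fun s : Finset V => s.card = 1) = univ.image (fun i : V => ({i} : Finset V)) := by
    ext s
    simp only [Finset.mem_filter, Finset.mem_univ, true_and, Finset.mem_image, Finset.card_eq_one]
    constructor
    · rintro ⟨a, rfl⟩
      exact ⟨a, rfl⟩
    · rintro ⟨a, rfl⟩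
      exact ⟨a, rfl⟩
  rw [himg, Finset.sum_image (fun a _ b _ h => Finset.singleton_injective h)]
  apply Finset.sum_congr rfl
  intro i _
  rw [Matrix.adjugate_apply]
  congr 1
  ext a b
  rw [Finset.piecewise_singleton]
  rfl

lemma card_filter_subtype (E : Finset (V × V)) (p : V × V → Prop) [DecidablePred p] :
    ((univ : Finset {e // e ∈ E}).filter fun g => p g.val).card = (E.filter p).card := by
  rw [Finset.card_filter, Finset.card_filter]
  exact Finset.sum_coe_sort E (fun e => if p e then 1 else 0)

lemma outdeg_lineE (E : Finset (V × V)) (f : {e // e ∈ E}) :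
    outdeg (lineE E) f = outdeg E (f : V × V).2 := by
  have h1 : ((lineE E).filter fun p => p.1 = f).card
      = ((univ : Finset {e // e ∈ E}).filter fun g : {e // e ∈ E} => (f : V × V).2 = (g : V × V).1).card := by
    apply Finset.card_bij' (fun p _ => p.2) (fun g _ => (f, g))
    case hi =>
      intro p hp
      simp only [lineE, Finset.mem_filter, Finset.mem_univ, true_and] at hp ⊢
      rw [← hp.2]
      exact hp.1
    case hj =>
      intro g hg
      simp only [lineE, Finset.mem_filter, Finset.mem_univ, true_and] at hg ⊢
      exact ⟨hg, trivial⟩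
    case left_inv =>
      intro p hp
      simp only [lineE, Finset.mem_filter, Finset.mem_univ, true_and] at hp
      obtain ⟨h1, h2⟩ := hp
      subst h2
      rfl
    case right_inv =>
      intro g _
      rfl
  have h2 := card_filter_subtype E (fun e => (f : V × V).2 = e.1)
  unfold outdeg
  rw [show ((E.filter fun e => e.1 = (f : V × V).2)) = E.filter fun e => (f : V × V).2 = e.1 by
    apply Finset.filter_congr; intro e _; simp [eq_comm]]
  rw [← h2, ← h1]

lemma indeg_lineE (E : Finset (V × V)) (f : {e // e ∈ E}) :
    indeg (lineE E) f = indeg E (f : V × V).1 := by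
  have h1 : ((lineE E).filter fun p => p.2 = f).card
      = ((univ : Finset {e // e ∈ E}).filter fun g : {e // e ∈ E} => (g : V × V).2 = (f : V × V).1).card := by
    apply Finset.card_bij' (fun p _ => p.1) (fun g _ => (g, f))
    case hi =>
      intro p hp
      simp only [lineE, Finset.mem_filter, Finset.mem_univ, true_and] at hp ⊢
      rw [hp.2] at hp
      exact hp.1
    case hj =>
      intro g hg
      simp only [lineE, Finset.mem_filter, Finset.mem_univ, true_and] at hg ⊢
      exact ⟨hg, trivial⟩
    case left_inv =>
      intro p hp
      simp only [lineE, Finset.mem_filter, Finset.mem_univ, true_and] at hp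
      obtain ⟨h1, h2⟩ := hp
      subst h2
      rfl
    case right_inv =>
      intro g _
      rfl
  have h2 := card_filter_subtype E (fun e => e.2 = (f : V × V).1)
  unfold indeg
  rw [← h2, ← h1]

noncomputable def Bmat (E : Finset (V × V)) : Matrix {e // e ∈ E} V ℝ :=
  Matrix.of fun f u => if (f : V × V).2 = u then 1 else 0

noncomputable def Cmat (E : Finset (V × V)) : Matrix V {e // e ∈ E} ℝ :=
  Matrix.of fun u g => if (g : V × V).1 = u then 1 else 0

lemma BC_apply (E : Finset (V × V)) (f g : {e // e ∈ E}) :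
    (Bmat E * Cmat E) f g = if (f : V × V).2 = (g : V × V).1 then 1 else 0 := by
  rw [Matrix.mul_apply]
  simp only [Bmat, Cmat, Matrix.of_apply, ite_mul, one_mul, zero_mul]
  rw [Finset.sum_ite_eq univ ((f : V × V).2) (fun u => if (g : V × V).1 = u then (1:ℝ) else 0)]
  simp [eq_comm]

lemma CB_apply (E : Finset (V × V)) (u w : V) :
    (Cmat E * Bmat E) u w = if (u, w) ∈ E then 1 else 0 := by
  rw [Matrix.mul_apply]
  simp only [Bmat, Cmat, Matrix.of_apply, ite_mul, one_mul, zero_mul]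
  have h1 : ∀ g : {e // e ∈ E},
      (if (g : V × V).1 = u then (if (g : V × V).2 = w then (1:ℝ) else 0) else 0)
      = if (g : V × V) = (u, w) then 1 else 0 := by
    intro g
    by_cases h1 : (g : V × V).1 = u <;> by_cases h2 : (g : V × V).2 = w <;>
      simp [h1, h2, Prod.ext_iff]
  rw [Finset.sum_congr rfl (fun g _ => h1 g)]
  rw [show (∑ g : {e // e ∈ E}, if (g : V × V) = (u, w) then (1:ℝ) else 0)
      = ∑ e ∈ E, (if e = (u, w) then (1:ℝ) else 0) from
    Finset.sum_coe_sort E (fun e => if e = (u, w) then (1:ℝ) else 0)]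
  rw [Finset.sum_ite_eq' E (u, w) (fun _ => (1:ℝ))]

lemma lap_line_eq (E : Finset (V × V)) (d : ℕ) (hreg : ∀ u, outdeg E u = d) :
    Lap (lineE E) = (d : ℝ) • (1 : Matrix {e // e ∈ E} {e // e ∈ E} ℝ) - Bmat E * Cmat E := by
  ext f g
  rw [Matrix.sub_apply, BC_apply]
  unfold Lap
  simp only [Matrix.of_apply, Matrix.smul_apply, Matrix.one_apply, smul_eq_mul]
  rw [outdeg_lineE, hreg]
  congr 1
  · by_cases h : f = g <;> simp [h]
  · simp only [lineE, Finset.mem_filter, Finset.mem_univ, true_and]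

lemma lap_G_eq (E : Finset (V × V)) (d : ℕ) (hreg : ∀ u, outdeg E u = d) :
    Lap E = (d : ℝ) • (1 : Matrix V V ℝ) - Cmat E * Bmat E := by
  ext u w
  rw [Matrix.sub_apply, CB_apply]
  unfold Lap
  simp only [Matrix.of_apply, Matrix.smul_apply, Matrix.one_apply, smul_eq_mul]
  rw [hreg]
  congr 1
  by_cases h : u = w <;> simp [h]

lemma det_lap_rel (E : Finset (V × V)) (d : ℕ) (hreg : ∀ u, outdeg E u = d)
    (hnm : Fintype.card V ≤ Fintype.card {e // e ∈ E})
    (x : ℝ) (hx : x + d ≠ 0) :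
    (Lap (lineE E) + x • 1).det
      = (x + d) ^ (Fintype.card {e // e ∈ E} - Fintype.card V) * (Lap E + x • 1).det := by
  classical
  set c : ℝ := -(x + d)⁻¹ with hc
  have hxc : (x + d) * c = -1 := by
    rw [hc, mul_neg, mul_inv_cancel₀ hx]
  have hL2 : (x + d) • ((1 : Matrix {e // e ∈ E} {e // e ∈ E} ℝ) + c • (Bmat E * Cmat E))
      = (x + d) • (1 : Matrix {e // e ∈ E} {e // e ∈ E} ℝ) - Bmat E * Cmat E := by
    rw [smul_add, smul_smul, hxc, neg_one_smul, sub_eq_add_neg]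
  have hG2 : (x + d) • ((1 : Matrix V V ℝ) + c • (Cmat E * Bmat E))
      = (x + d) • (1 : Matrix V V ℝ) - Cmat E * Bmat E := by
    rw [smul_add, smul_smul, hxc, neg_one_smul, sub_eq_add_neg]
  have hL : Lap (lineE E) + x • 1
      = (x + d) • ((1 : Matrix {e // e ∈ E} {e // e ∈ E} ℝ) + c • (Bmat E * Cmat E)) := by
    rw [hL2, lap_line_eq E d hreg, add_smul]
    abel
  have hG : Lap E + x • 1
      = (x + d) • ((1 : Matrix V V ℝ) + c • (Cmat E * Bmat E)) := by
    rw [hG2, lap_G_eq E d hreg, add_smul]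
    abel
  rw [hL, hG, Matrix.det_smul, Matrix.det_smul]
  have hcomm : ((1 : Matrix {e // e ∈ E} {e // e ∈ E} ℝ) + c • (Bmat E * Cmat E)).det
      = ((1 : Matrix V V ℝ) + c • (Cmat E * Bmat E)).det := by
    rw [← Matrix.smul_mul, Matrix.det_one_add_mul_comm, Matrix.mul_smul]
  rw [hcomm]
  rw [← mul_assoc, ← pow_add]
  congr 2
  omega

/-- For a digraph `G` on `n` vertices with `d⁺(u) = d⁻(u) = d > 0` for every vertex `u`,
any edge `e` and any vertex `v`: `κ_e(L(G)) = d^(n(d-1)-1) · κ_v(G)`. -/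
theorem stmt16 (E : Finset (V × V)) (d : ℕ) (hd : 0 < d)
    (hreg : ∀ u, outdeg E u = d ∧ indeg E u = d)
    (e : {e // e ∈ E}) (v : V) :
    kappa (lineE E) e = d ^ (Fintype.card V * (d - 1) - 1) * kappa E v := by
  classical
  have hV : Nonempty V := ⟨(e : V × V).1⟩
  have hEne : Nonempty {e' // e' ∈ E} := ⟨e⟩
  set n := Fintype.card V with hn
  set m := Fintype.card {e' // e' ∈ E} with hm
  have hout : ∀ u, outdeg E u = d := fun u => (hreg u).1
  have hin : ∀ u, indeg E u = d := fun u => (hreg u).2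
  have hmnd : m = n * d := by
    rw [hm, Fintype.card_coe]
    rw [Finset.card_eq_sum_card_fiberwise (f := fun e => e.1) (t := univ)
      (fun x _ => Finset.mem_univ _)]
    have : ∀ u : V, (E.filter fun e => e.1 = u).card = d := fun u => hout u
    rw [Finset.sum_congr rfl (fun u _ => this u), Finset.sum_const, Finset.card_univ,
      smul_eq_mul]
  have hn1 : 1 ≤ n := Fintype.card_pos
  have hnm : n ≤ m := by rw [hmnd]; exact Nat.le_mul_of_pos_right n hd
  have hrowL : ∀ f, ∑ g, Lap (lineE E) f g = 0 := fun f => lap_row_sum _ f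
  have hcolL : ∀ g, ∑ f, Lap (lineE E) f g = 0 := by
    intro g
    rw [lap_col_sum, outdeg_lineE, indeg_lineE, hout, hin]
    ring
  have hrowG : ∀ i, ∑ j, Lap E i j = 0 := fun i => lap_row_sum _ i
  have hcolG : ∀ j, ∑ i, Lap E i j = 0 := by
    intro j
    rw [lap_col_sum, hout, hin]
    ring
  have hadjL : ∀ f, (Lap (lineE E)).adjugate f f = (kappa (lineE E) e : ℝ) := by
    intro f
    rw [adj_entries_eq (Lap (lineE E)) hrowL hcolL f f e e, Matrix.adjugate_apply,
      det_lap_updateRow]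
  have hadjG : ∀ u, (Lap E).adjugate u u = (kappa E v : ℝ) := by
    intro u
    rw [adj_entries_eq (Lap E) hrowG hcolG u u v v, Matrix.adjugate_apply, det_lap_updateRow]
  have hpoly : detPoly (Lap (lineE E))
      = (Polynomial.X + Polynomial.C (d:ℝ)) ^ (m - n) * detPoly (Lap E) := by
    have hroots : ∀ x : ℝ, x ≠ -(d:ℝ) →
        (detPoly (Lap (lineE E))
          - (Polynomial.X + Polynomial.C (d:ℝ)) ^ (m - n) * detPoly (Lap E)).IsRoot x := by
      intro x hx
      have hx' : x + (d:ℝ) ≠ 0 := fun h => hx (by linarith)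
      simp only [Polynomial.IsRoot, Polynomial.eval_sub, Polynomial.eval_mul,
        Polynomial.eval_pow, Polynomial.eval_add, Polynomial.eval_X, Polynomial.eval_C,
        detPoly_eval]
      rw [det_lap_rel E d hout hnm x hx']
      ring
    have hinf : {x : ℝ | (detPoly (Lap (lineE E))
        - (Polynomial.X + Polynomial.C (d:ℝ)) ^ (m - n) * detPoly (Lap E)).IsRoot x}.Infinite := by
      apply Set.Infinite.mono (s := ({-(d:ℝ)} : Set ℝ)ᶜ)
      · intro x hx
        exact hroots x hx
      · exact (Set.finite_singleton _).infinite_compl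
    have h0 := Polynomial.eq_zero_of_infinite_isRoot _ hinf
    exact sub_eq_zero.mp h0
  have hc1 := congrArg (fun p : Polynomial ℝ => p.coeff 1) hpoly
  have hmul : ((Polynomial.X + Polynomial.C (d:ℝ)) ^ (m - n) * detPoly (Lap E)).coeff 1
      = ((Polynomial.X + Polynomial.C (d:ℝ)) ^ (m - n)).coeff 0 * (detPoly (Lap E)).coeff 1
        + ((Polynomial.X + Polynomial.C (d:ℝ)) ^ (m - n)).coeff 1 * (detPoly (Lap E)).coeff 0 := by
    rw [Polynomial.coeff_mul]
    rw [show Finset.HasAntidiagonal.antidiagonal (1:ℕ) = {(0, 1), (1, 0)} by decide]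
    rw [Finset.sum_pair (by decide)]
  rw [hmul, detPoly_coeff_one, detPoly_coeff_one, detPoly_coeff_zero] at hc1
  have hG0 : (Lap E).det = 0 := det_eq_zero_of_row_sums _ hrowG
  have hq0 : ((Polynomial.X + Polynomial.C (d:ℝ)) ^ (m - n)).coeff 0 = (d:ℝ) ^ (m - n) := by
    rw [Polynomial.coeff_zero_eq_eval_zero]
    simp
  rw [hG0, mul_zero, add_zero, hq0] at hc1
  rw [Finset.sum_congr rfl (fun f _ => hadjL f), Finset.sum_congr rfl (fun u _ => hadjG u),
    Finset.sum_const, Finset.sum_const, Finset.card_univ, Finset.card_univ, ← hm, ← hn] at hc1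
  simp only [nsmul_eq_mul] at hc1
  -- hc1 : (m:ℝ) * κL = d^(m-n) * ((n:ℝ) * κG)
  obtain ⟨d', rfl⟩ : ∃ d', d = d' + 1 := ⟨d - 1, by omega⟩
  have hmn_eq : m - n = n * d' := by
    rw [hmnd]
    ring_nf
    omega
  by_cases hd' : d' = 0
  · subst hd'
    simp only [hmn_eq, mul_zero, pow_zero, one_mul] at hc1
    have hmn0 : m = n := by rw [hmnd]; ring
    rw [hmn0] at hc1
    have : (kappa (lineE E) e : ℝ) = (kappa E v : ℝ) := by
      have hne : (n:ℝ) ≠ 0 := by positivity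
      exact mul_left_cancel₀ hne hc1
    have hnat : kappa (lineE E) e = kappa E v := by exact_mod_cast this
    simp [hnat]
  · have hpos : 1 ≤ n * d' := Nat.one_le_iff_ne_zero.mpr (by positivity)
    have hpow : ((d' + 1 : ℕ):ℝ) ^ (m - n) = ((d' + 1 : ℕ):ℝ) * ((d' + 1 : ℕ):ℝ) ^ (n * d' - 1) := by
      rw [hmn_eq, ← pow_succ']
      congr 1
      omega
    rw [hpow, hmnd] at hc1
    push_cast at hc1
    have hc2 : ((n:ℝ) * ((d':ℝ) + 1)) * (kappa (lineE E) e : ℝ)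
        = ((n:ℝ) * ((d':ℝ) + 1)) * (((d':ℝ) + 1) ^ (n * d' - 1) * (kappa E v : ℝ)) := by
      rw [hc1]
      ring
    have hne : (n:ℝ) * ((d':ℝ) + 1) ≠ 0 := by positivity
    have hc3 := mul_left_cancel₀ hne hc2
    have hgoal : (kappa (lineE E) e : ℝ)
        = ((d' + 1 : ℕ) ^ (n * ((d' + 1) - 1) - 1) * kappa E v : ℕ) := by
      push_cast
      exact hc3
    exact_mod_cast hgoal
end
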